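/- For all g ∈ S_m and h ∈ S_n, the quantity Δ(g,h) := n·ind(g) + m·ind(h) − ind(g,h) is nonnegative, and Δ(g,h) ≤ m·ind(h). -/

import Mathlib

set_option linter.unusedSectionVars false

/-- The multiset of all cycle lengths of a permutation, counting fixed points as 1-cycles. -/
def fullCycleType {α : Type*} [Fintype α] [DecidableEq α] (σ : Equiv.Perm α) : Multiset ℕ :=
  σ.cycleType + Multiset.replicate (Fintype.card α - σ.support.card) 1

/-- The number of cycles of a permutation (fixed points counted as 1-cycles),
i.e. the number of orbits of the cyclic group it generates. -/
def cycleCount {α : Type*} [Fintype α] [DecidableEq α] (σ : Equiv.Perm α) : ℕ :=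
  Multiset.card (fullCycleType σ)

/-- `ind σ = N - (number of cycles of σ)` for `σ` a permutation of a set of size `N`. -/
def ind {α : Type*} [Fintype α] [DecidableEq α] (σ : Equiv.Perm α) : ℕ :=
  Fintype.card α - cycleCount σ

open Equiv Equiv.Perm

section aux

variable {α β : Type*} [Fintype α] [DecidableEq α] [Fintype β] [DecidableEq β]

/-- The same-cycle setoid. -/
def scSetoid (σ : Equiv.Perm α) : Setoid α :=
  ⟨σ.SameCycle, ⟨SameCycle.refl σ, SameCycle.symm, SameCycle.trans⟩⟩

noncomputable instance (σ : Equiv.Perm α) : Fintype (Quotient (scSetoid σ)) :=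
  @Quotient.fintype _ _ (scSetoid σ) (Classical.decRel _)

lemma cycleCount_eq (σ : Equiv.Perm α) :
    cycleCount σ = σ.cycleFactorsFinset.card + (Fintype.card α - σ.support.card) := by
  simp [cycleCount, fullCycleType, cycleType_def]

lemma sameCycle_fixed {σ : Equiv.Perm α} {x y : α} (hx : σ x = x) (hxy : σ.SameCycle x y) :
    x = y := by
  obtain ⟨k, hk⟩ := hxy
  rw [zpow_apply_eq_self_of_apply_eq_self hx] at hk
  exact hk

/-- The classifying map. -/
noncomputable def classify (σ : Equiv.Perm α) (x : α) :
    ↥σ.cycleFactorsFinset ⊕ {x : α // σ x = x} :=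
  if hx : σ x = x then .inr ⟨x, hx⟩ else
    .inl ⟨σ.cycleOf x, cycleOf_mem_cycleFactorsFinset_iff.mpr (mem_support.mpr hx)⟩

lemma classify_eq_iff (σ : Equiv.Perm α) {x y : α} :
    classify σ x = classify σ y ↔ σ.SameCycle x y := by
  classical
  constructor
  · intro hcl
    by_cases hx : σ x = x <;> by_cases hy : σ y = y <;>
      simp [classify, hx, hy] at hcl
    · exact hcl ▸ SameCycle.refl σ x
    · -- cycleOf equal, both in support
      have hy' : y ∈ (σ.cycleOf y).support :=
        mem_support_cycleOf_iff.mpr ⟨SameCycle.refl σ y, mem_support.mpr hy⟩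
      rw [← hcl] at hy'
      exact (mem_support_cycleOf_iff.mp hy').1
  · intro hxy
    by_cases hx : σ x = x
    · obtain rfl := sameCycle_fixed hx hxy
      rfl
    · have hy : ¬ σ y = y := by
        intro hy
        exact hx ((sameCycle_fixed hy hxy.symm) ▸ hy)
      simp [classify, hx, hy, hxy.cycleOf_eq]

lemma classify_surjective (σ : Equiv.Perm α) : Function.Surjective (classify σ) := by
  classical
  rintro (⟨c, hc⟩ | ⟨x, hx⟩)
  · have hc' := (mem_cycleFactorsFinset_iff.mp hc).1
    obtain ⟨x, hx⟩ := hc'.nonempty_support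
    have hcx : σ.cycleOf x = c := (cycle_is_cycleOf hx hc).symm
    have hxs : x ∈ σ.support := mem_cycleFactorsFinset_support_le hc hx
    refine ⟨x, ?_⟩
    simp [classify, mem_support.mp hxs, hcx]
  · exact ⟨x, by simp [classify, hx]⟩

/-- The quotient by the same-cycle relation has `cycleCount σ` elements. -/
lemma card_quotient_eq (σ : Equiv.Perm α) :
    Fintype.card (Quotient (scSetoid σ)) = cycleCount σ := by
  classical
  have hbij : Function.Bijective
      (Quotient.lift (classify σ) (fun a b hab => (classify_eq_iff σ).mpr hab) :
        Quotient (scSetoid σ) → ↥σ.cycleFactorsFinset ⊕ {x : α // σ x = x}) := by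
    constructor
    · rintro ⟨a⟩ ⟨b⟩ hab
      exact Quotient.sound ((classify_eq_iff σ).mp hab)
    · intro y
      obtain ⟨x, hx⟩ := classify_surjective σ y
      exact ⟨⟦x⟧, hx⟩
  rw [Fintype.card_of_bijective hbij, cycleCount_eq]
  have h1 : Fintype.card {x : α // σ x = x} = Fintype.card α - σ.support.card := by
    have : Fintype.card {x : α // x ∈ σ.support} = σ.support.card := Fintype.card_coe _
    have h2 := Fintype.card_subtype_compl (fun x => x ∈ σ.support)
    rw [this] at h2
    rw [← h2]
    apply Fintype.card_congr
    exact Equiv.subtypeEquivRight (fun x => by simp [mem_support])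
  simp [h1, Fintype.card_coe]

lemma cycleCount_le_card (σ : Equiv.Perm α) : cycleCount σ ≤ Fintype.card α := by
  rw [← card_quotient_eq]
  exact Fintype.card_le_of_surjective _ Quotient.mk''_surjective

lemma prodCongr_zpow_apply (g : Equiv.Perm α) (h : Equiv.Perm β) (k : ℤ) (x : α) (y : β) :
    ((g.prodCongr h) ^ k) (x, y) = ((g ^ k) x, (h ^ k) y) := by
  have hn : ∀ (n : ℕ) (x : α) (y : β), ((g.prodCongr h) ^ n) (x, y) = ((g ^ n) x, (h ^ n) y) := by
    intro n
    induction n with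
    | zero => simp
    | succ n ih => intro x y; simp [pow_succ, Equiv.Perm.mul_apply, ih]
  cases k with
  | ofNat n => simpa using hn n x y
  | negSucc n =>
    have := hn (n + 1) ((g ^ (n+1))⁻¹ x) ((h ^ (n+1))⁻¹ y)
    simp only [← Equiv.Perm.mul_apply, mul_inv_cancel, Equiv.Perm.one_apply] at this
    rw [zpow_negSucc, zpow_negSucc, zpow_negSucc]
    rw [← this]
    simp

lemma sameCycle_prod_iff {g : Equiv.Perm α} {h : Equiv.Perm β} {x x' : α} {y y' : β} :
    Equiv.Perm.SameCycle (g.prodCongr h) (x, y) (x', y') ↔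
      ∃ k : ℤ, (g ^ k) x = x' ∧ (h ^ k) y = y' := by
  constructor
  · rintro ⟨k, hk⟩
    rw [prodCongr_zpow_apply] at hk
    exact ⟨k, congrArg Prod.fst hk, congrArg Prod.snd hk⟩
  · rintro ⟨k, h1, h2⟩
    exact ⟨k, by rw [prodCongr_zpow_apply, h1, h2]⟩

lemma cycleCount_prod_ge (g : Equiv.Perm α) (h : Equiv.Perm β) :
    cycleCount g * cycleCount h ≤ cycleCount (g.prodCongr h) := by
  classical
  rw [← card_quotient_eq, ← card_quotient_eq, ← card_quotient_eq,
    ← Fintype.card_prod]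
  refine Fintype.card_le_of_surjective
    (Quotient.lift (fun p : α × β => ((⟦p.1⟧ : Quotient (scSetoid g)),
        (⟦p.2⟧ : Quotient (scSetoid h))))
      ?_) ?_
  · rintro ⟨x, y⟩ ⟨x', y'⟩ hab
    obtain ⟨k, h1, h2⟩ := sameCycle_prod_iff.mp hab
    exact Prod.ext (Quotient.sound ⟨k, h1⟩) (Quotient.sound ⟨k, h2⟩)
  · rintro ⟨⟨x⟩, ⟨y⟩⟩
    exact ⟨⟦(x, y)⟧, rfl⟩

noncomputable def pInj (g : Equiv.Perm α) (h : Equiv.Perm β)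
    (q : Quotient (scSetoid (g.prodCongr h))) : Quotient (scSetoid g) × β :=
  ((⟦q.out.1⟧ : Quotient (scSetoid g)),
    (h ^ (Quotient.exact (Quotient.out_eq (⟦q.out.1⟧ : Quotient (scSetoid g))).symm :
      g.SameCycle q.out.1 (⟦q.out.1⟧ : Quotient (scSetoid g)).out).choose) q.out.2)

lemma pInj_spec (g : Equiv.Perm α) (h : Equiv.Perm β)
    (q : Quotient (scSetoid (g.prodCongr h))) :
    Equiv.Perm.SameCycle (g.prodCongr h) q.out ((pInj g h q).1.out, (pInj g h q).2) := by
  have hsc : g.SameCycle q.out.1 (⟦q.out.1⟧ : Quotient (scSetoid g)).out :=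
    Quotient.exact (Quotient.out_eq (⟦q.out.1⟧ : Quotient (scSetoid g))).symm
  refine ⟨hsc.choose, ((prodCongr_zpow_apply g h hsc.choose q.out.1 q.out.2).trans ?_)⟩
  exact Prod.ext hsc.choose_spec rfl

lemma pInj_injective (g : Equiv.Perm α) (h : Equiv.Perm β) :
    Function.Injective (pInj g h) := by
  intro q1 q2 heq
  have h1 := pInj_spec g h q1
  have h2 := pInj_spec g h q2
  rw [heq] at h1
  have : Equiv.Perm.SameCycle (g.prodCongr h) q1.out q2.out := h1.trans h2.symm
  rw [← Quotient.out_eq q1, ← Quotient.out_eq q2]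
  exact Quotient.sound this

lemma cycleCount_prod_le (g : Equiv.Perm α) (h : Equiv.Perm β) :
    cycleCount (g.prodCongr h) ≤ cycleCount g * Fintype.card β := by
  classical
  calc cycleCount (g.prodCongr h)
      = Fintype.card (Quotient (scSetoid (g.prodCongr h))) := (card_quotient_eq _).symm
    _ ≤ Fintype.card (Quotient (scSetoid g) × β) :=
        Fintype.card_le_of_injective _ (pInj_injective g h)
    _ = cycleCount g * Fintype.card β := by rw [Fintype.card_prod, card_quotient_eq]

end aux

theorem stmt_5 {m n : ℕ} (g : Equiv.Perm (Fin m)) (h : Equiv.Perm (Fin n)) :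
    0 ≤ (n : ℤ) * ind g + (m : ℤ) * ind h - ind (g.prodCongr h) ∧
    (n : ℤ) * ind g + (m : ℤ) * ind h - ind (g.prodCongr h) ≤ (m : ℤ) * ind h := by
  have hcg : cycleCount g ≤ m := by simpa using cycleCount_le_card g
  have hch : cycleCount h ≤ n := by simpa using cycleCount_le_card h
  have hcp : cycleCount (g.prodCongr h) ≤ m * n := by
    simpa using cycleCount_le_card (g.prodCongr h)
  have h1 : cycleCount g * cycleCount h ≤ cycleCount (g.prodCongr h) :=
    cycleCount_prod_ge g h
  have h2 : cycleCount (g.prodCongr h) ≤ cycleCount g * n := by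
    simpa using cycleCount_prod_le g h
  have hind : ∀ {α : Type} [Fintype α] [DecidableEq α] (σ : Equiv.Perm α),
      (ind σ : ℤ) = (Fintype.card α : ℤ) - cycleCount σ := by
    intro α _ _ σ
    have := cycleCount_le_card σ
    simp [ind]
    omega
  rw [hind g, hind h, hind (g.prodCongr h)]
  simp only [Fintype.card_fin, Fintype.card_prod]
  have h1' : (cycleCount g : ℤ) * cycleCount h ≤ cycleCount (g.prodCongr h) := by
    exact_mod_cast h1
  have h2' : (cycleCount (g.prodCongr h) : ℤ) ≤ cycleCount g * n := by exact_mod_cast h2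
  have hcg' : (cycleCount g : ℤ) ≤ m := by exact_mod_cast hcg
  have hch' : (cycleCount h : ℤ) ≤ n := by exact_mod_cast hch
  have hcp' : (cycleCount (g.prodCongr h) : ℤ) ≤ m * n := by exact_mod_cast hcp
  push_cast
  constructor
  · nlinarith [h1', hcg', hch', hcp']
  · nlinarith [h2', hcg', hch']
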